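/- The set of relevant coordinates is itself a sufficient set, and hence is the unique minimum sufficient set. -/
import Mathlib


/-- The set of optimal actions at state `s`. -/
def Opt {A : Type} [Fintype A] {S : Type} (U : A → S → ℚ) (s : S) : Set A :=
  {a | ∀ b, U b s ≤ U a s}

/-- A coordinate set `I` is sufficient if states agreeing on `I` have equal optimal sets. -/
def Sufficient {A : Type} [Fintype A] {n : ℕ} {X : Fin n → Type}
    (U : A → (∀ i, X i) → ℚ) (I : Finset (Fin n)) : Prop :=
  ∀ s s' : ∀ i, X i, (∀ i ∈ I, s i = s' i) → Opt U s = Opt U s'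

/-- Coordinate `i` is relevant if two states differing only at `i` have different optimal sets. -/
def Relevant {A : Type} [Fintype A] {n : ℕ} {X : Fin n → Type}
    (U : A → (∀ i, X i) → ℚ) (i : Fin n) : Prop :=
  ∃ s s' : ∀ j, X j, (∀ j, j ≠ i → s j = s' j) ∧ Opt U s ≠ Opt U s'

open Classical

lemma opt_eq_of_irrelevant_diffs {A : Type} [Fintype A] {n : ℕ} {X : Fin n → Type}
    (U : A → (∀ i, X i) → ℚ) (T : Finset (Fin n)) (hT : ∀ i ∈ T, ¬ Relevant U i) :
    ∀ s s' : ∀ i, X i, (∀ i, i ∉ T → s i = s' i) → Opt U s = Opt U s' := by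
  classical
  induction T using Finset.induction_on with
  | empty =>
    intro s s' h
    have : s = s' := funext fun i => h i (by simp)
    rw [this]
  | @insert j T' hj ih =>
    intro s s' h
    have hjirr : ¬ Relevant U j := hT j (Finset.mem_insert_self j T')
    set s'' : ∀ i, X i := Function.update s j (s' j) with hs''
    have h1 : Opt U s = Opt U s'' := by
      by_contra hne
      exact hjirr ⟨s, s'', fun k hk => (Function.update_of_ne hk _ _).symm, hne⟩
    have h2 : Opt U s'' = Opt U s' := by
      refine ih (fun i hi => hT i (Finset.mem_insert_of_mem hi)) s'' s' fun i hi => ?_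
      by_cases hij : i = j
      · subst hij; simp [hs'']
      · rw [hs'', Function.update_of_ne hij]
        exact h i (by simp [hi, hij])
    exact h1.trans h2

lemma relevant_mem_of_sufficient {A : Type} [Fintype A] {n : ℕ} {X : Fin n → Type}
    (U : A → (∀ i, X i) → ℚ) {J : Finset (Fin n)} (hJ : Sufficient U J)
    {i : Fin n} (hi : Relevant U i) : i ∈ J := by
  by_contra hiJ
  obtain ⟨s, s', hdiff, hne⟩ := hi
  exact hne (hJ s s' fun k hk => hdiff k (fun e => hiJ (e ▸ hk)))

open Classical in
theorem relevant_set_is_unique_minimum {A : Type} [Fintype A] {n : ℕ} {X : Fin n → Type}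
    [∀ i, Fintype (X i)] [∀ i, Nonempty (X i)]
    (U : A → (∀ i, X i) → ℚ) :
    Sufficient U (Finset.univ.filter (fun i => Relevant U i)) ∧
    (∀ J : Finset (Fin n), Sufficient U J →
      (Finset.univ.filter (fun i => Relevant U i)).card ≤ J.card) ∧
    (∀ J : Finset (Fin n), Sufficient U J →
      J.card = (Finset.univ.filter (fun i => Relevant U i)).card →
      J = Finset.univ.filter (fun i => Relevant U i)) := by
  classical
  set R := Finset.univ.filter (fun i => Relevant U i) with hR
  have hsuff : Sufficient U R := by
    intro s s' h
    refine opt_eq_of_irrelevant_diffs U (Finset.univ \ R) ?_ s s' ?_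
    · intro i hi
      simp only [Finset.mem_sdiff, hR, Finset.mem_filter, Finset.mem_univ, true_and] at hi
      exact hi
    · intro i hi
      simp only [Finset.mem_sdiff, Finset.mem_univ, true_and, not_not] at hi
      exact h i hi
  have hsub : ∀ J : Finset (Fin n), Sufficient U J → R ⊆ J := fun J hJ i hi => by
    simp only [hR, Finset.mem_filter, Finset.mem_univ, true_and] at hi
    exact relevant_mem_of_sufficient U hJ hi
  refine ⟨hsuff, fun J hJ => Finset.card_le_card (hsub J hJ), fun J hJ hcard => ?_⟩
  exact (Finset.eq_of_subset_of_card_le (hsub J hJ) hcard.le).symm
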